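/- If a multisegment 𝔫 is obtained from a multisegment 𝔪 by a nonempty sequence of elementary intersection-union processes, then 𝔫 ≠ 𝔪. Consequently, the relation ≤_Z (defined by: 𝔫 ≤_Z 𝔪 iff 𝔫 is obtained from 𝔪 by a possibly empty sequence of elementary intersection-union processes) is a partial order on multisegments. -/
import Mathlib

/-- `s < t` for linked segments: `a < a' ≤ b+1 ≤ b'`. -/
def SegLT (s t : ℤ × ℤ) : Prop := s.1 < t.1 ∧ t.1 ≤ s.2 + 1 ∧ s.2 + 1 ≤ t.2

/-- The multiset `{[x,y]}` if `x ≤ y`, empty otherwise. -/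
def seg? (x y : ℤ) : Multiset (ℤ × ℤ) := if x ≤ y then {(x, y)} else 0

/-- `IUStep m n`: `n` is obtained from `m` by one elementary intersection-union
process: replace a linked pair `Δ < Δ'` in `m` by `Δ∪Δ'` and `Δ∩Δ'`
(dropping the intersection if empty). -/
def IUStep (m n : Multiset (ℤ × ℤ)) : Prop :=
  ∃ Δ Δ' : ℤ × ℤ, Δ ∈ m ∧ Δ' ∈ m.erase Δ ∧ SegLT Δ Δ' ∧
    n = ((m.erase Δ).erase Δ') + {(Δ.1, Δ'.2)} + seg? Δ'.1 Δ.2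

/-- `n ≤_Z m`: `n` is obtained from `m` by a (possibly empty) sequence of
elementary intersection-union processes. -/
def leZ (n m : Multiset (ℤ × ℤ)) : Prop := Relation.ReflTransGen IUStep m n

/-- Energy: sum of squared lengths. -/
def energy (m : Multiset (ℤ × ℤ)) : ℤ := (m.map fun p => (p.2 - p.1 + 1) ^ 2).sum

lemma energy_cons (x : ℤ × ℤ) (m : Multiset (ℤ × ℤ)) :
    energy (x ::ₘ m) = (x.2 - x.1 + 1) ^ 2 + energy m := by
  simp [energy]

lemma energy_erase {x : ℤ × ℤ} {m : Multiset (ℤ × ℤ)} (h : x ∈ m) :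
    energy m = (x.2 - x.1 + 1) ^ 2 + energy (m.erase x) := by
  conv_lhs => rw [← Multiset.cons_erase h]
  exact energy_cons x _

lemma energy_lt {m n : Multiset (ℤ × ℤ)} (h : IUStep m n) : energy m < energy n := by
  obtain ⟨Δ, Δ', hΔ, hΔ', ⟨h1, h2, h3⟩, hn⟩ := h
  rw [energy_erase hΔ, energy_erase hΔ', hn]
  simp only [energy, Multiset.map_add, Multiset.sum_add]
  have hseg : (Multiset.map (fun p : ℤ × ℤ => (p.2 - p.1 + 1) ^ 2) (seg? Δ'.1 Δ.2)).sum
      = if Δ'.1 ≤ Δ.2 then (Δ.2 - Δ'.1 + 1) ^ 2 else 0 := by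
    unfold seg?; split <;> simp
  rw [hseg]
  have key : (Δ.2 - Δ.1 + 1) ^ 2 + (Δ'.2 - Δ'.1 + 1) ^ 2 <
      (Δ'.2 - Δ.1 + 1) ^ 2 + (if Δ'.1 ≤ Δ.2 then (Δ.2 - Δ'.1 + 1) ^ 2 else 0) := by
    split
    · nlinarith
    · have : Δ'.1 = Δ.2 + 1 := by omega
      nlinarith
  have hsum : (Multiset.map (fun p : ℤ × ℤ => (p.2 - p.1 + 1) ^ 2)
      ({(Δ.1, Δ'.2)} : Multiset (ℤ × ℤ))).sum = (Δ'.2 - Δ.1 + 1) ^ 2 := by simp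
  rw [hsum]
  linarith [key]

/-- A nonempty sequence of elementary intersection-union processes changes the
multisegment; consequently `≤_Z` is a partial order (reflexive, transitive and
antisymmetric) on multisegments. -/
theorem leZ_partialOrder :
    (∀ m n : Multiset (ℤ × ℤ), Relation.TransGen IUStep m n → n ≠ m) ∧
    (∀ m : Multiset (ℤ × ℤ), leZ m m) ∧
    (∀ a b c : Multiset (ℤ × ℤ), leZ a b → leZ b c → leZ a c) ∧
    (∀ a b : Multiset (ℤ × ℤ), leZ a b → leZ b a → a = b) := by
  have hlt : ∀ m n, Relation.TransGen IUStep m n → energy m < energy n := by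
    intro m n h
    induction h with
    | single h => exact energy_lt h
    | tail _ h ih => exact ih.trans (energy_lt h)
  refine ⟨fun m n h hne => ?_, fun m => Relation.ReflTransGen.refl,
    fun a b c hab hbc => hbc.trans hab, fun a b hab hba => ?_⟩
  · exact (hlt m n h).ne' (by rw [hne])
  · by_contra hne
    rcases (Relation.reflTransGen_iff_eq_or_transGen.mp hab) with h | h
    · exact hne h
    rcases (Relation.reflTransGen_iff_eq_or_transGen.mp hba) with h' | h'
    · exact hne h'.symm
    exact (hlt a a (h'.trans h)).ne rfl
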